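/- Every Cauchy sequence {F_n^{σ_n}} in (D⁺, ρ⁺) has a limit F^σ ∈ D⁺, i.e. ρ⁺(F_n^{σ_n}, F^σ) → 0; moreover, if all F_n are continuous, then F can be taken continuous. Hence the quotient metric space D⁺/≡ (with ρ⁺(x,y)=0 declared as equality) is complete. -/

import Mathlib

open Filter

/-- A càdlàg function on `[0,1]`: right-continuous on `[0,1)`, left limits on `(0,1]`. -/
def Cadlag (f : unitInterval → ℝ) : Prop :=
  (∀ t : unitInterval, (t : ℝ) < 1 →
    Filter.Tendsto f (nhdsWithin t (Set.Ioi t)) (nhds (f t))) ∧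
  (∀ t : unitInterval, 0 < (t : ℝ) →
    ∃ l : ℝ, Filter.Tendsto f (nhdsWithin t (Set.Iio t)) (nhds l))

/-- Increasing homeomorphism of `[0,1]` onto itself. -/
def IsIncHomeo (γ : unitInterval → unitInterval) : Prop :=
  Continuous γ ∧ StrictMono γ ∧ Function.Bijective γ

/-- `Σ`: continuous non-decreasing surjections of `[0,1]` onto itself. -/
def InSigma (σ : unitInterval → unitInterval) : Prop :=
  Continuous σ ∧ Monotone σ ∧ Function.Surjective σ

/-- Skorokhod distance on functions on `[0,1]`. -/
noncomputable def skorokhodDist (f g : unitInterval → ℝ) : ℝ :=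
  sInf { c : ℝ | ∃ γ : unitInterval → unitInterval, IsIncHomeo γ ∧
    (⨆ s : unitInterval, |f s - g (γ s)|) + (⨆ s : unitInterval, |(s : ℝ) - (γ s : ℝ)|) = c }

/-- Extended Skorokhod semi-distance on turbofunctions. -/
noncomputable def rhoPlus (P Q : (unitInterval → ℝ) × (unitInterval → unitInterval)) : ℝ :=
  sInf { c : ℝ | ∃ γ : unitInterval → unitInterval, IsIncHomeo γ ∧
    (⨆ t : unitInterval, |P.1 (γ t) - Q.1 t|) +
    (⨆ t : unitInterval, |(P.2 (γ t) : ℝ) - (Q.2 t : ℝ)|) = c }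

instance : Fact ((0:ℝ) ≤ 1) := ⟨zero_le_one⟩

/-- Right-continuous inverse `σ⁻¹(s) = max {t : σ t ≤ s}` (as a supremum). -/
noncomputable def rcInv (σ : unitInterval → unitInterval) (s : unitInterval) : unitInterval :=
  sSup {t : unitInterval | σ t ≤ s}

open Set

section Aux

/-! #### Boundedness of càdlàg functions -/

lemma cadlag_loc_bdd {f : unitInterval → ℝ} (hf : Cadlag f) (t : unitInterval) :
    ∃ M : ℝ, ∀ᶠ x in nhds t, |f x| ≤ M := by
  have hL : ∃ M : ℝ, ∀ᶠ x in nhdsWithin t (Iio t), |f x| ≤ M := by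
    by_cases ht : 0 < (t : ℝ)
    · obtain ⟨l, hl⟩ := hf.2 t ht
      refine ⟨|l| + 1, ?_⟩
      have := hl (Metric.ball_mem_nhds l one_pos)
      filter_upwards [this] with x hx
      have : |f x - l| < 1 := by simpa [Real.dist_eq] using hx
      calc |f x| ≤ |f x - l| + |l| := by
            simpa using abs_add_le (f x - l) l
        _ ≤ |l| + 1 := by linarith
    · have : Iio t = (∅ : Set unitInterval) := by
        ext x
        simp only [mem_Iio, mem_empty_iff_false, iff_false, not_lt]
        have h0 : (t : ℝ) = 0 := le_antisymm (not_lt.1 ht) t.2.1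
        have : (t : ℝ) ≤ (x : ℝ) := h0 ▸ x.2.1
        exact Subtype.coe_le_coe.1 this
      exact ⟨0, by simp [this]⟩
  have hR : ∃ M : ℝ, ∀ᶠ x in nhdsWithin t (Ioi t), |f x| ≤ M := by
    by_cases ht : (t : ℝ) < 1
    · refine ⟨|f t| + 1, ?_⟩
      have := hf.1 t ht (Metric.ball_mem_nhds (f t) one_pos)
      filter_upwards [this] with x hx
      have : |f x - f t| < 1 := by simpa [Real.dist_eq] using hx
      calc |f x| ≤ |f x - f t| + |f t| := by
            simpa using abs_add_le (f x - f t) (f t)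
        _ ≤ |f t| + 1 := by linarith
    · have : Ioi t = (∅ : Set unitInterval) := by
        ext x
        simp only [mem_Ioi, mem_empty_iff_false, iff_false, not_lt]
        have h1 : (t : ℝ) = 1 := le_antisymm t.2.2 (not_lt.1 ht)
        have : (x : ℝ) ≤ (t : ℝ) := h1 ▸ x.2.2
        exact Subtype.coe_le_coe.1 this
      exact ⟨0, by simp [this]⟩
  obtain ⟨M1, h1⟩ := hL
  obtain ⟨M2, h2⟩ := hR
  refine ⟨max (max M1 M2) (|f t|), ?_⟩
  have hdecomp : nhds t = nhdsWithin t (Iio t) ⊔ pure t ⊔ nhdsWithin t (Ioi t) := by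
    rw [← nhdsWithin_univ]
    have : (univ : Set unitInterval) = Iio t ∪ {t} ∪ Ioi t := by
      ext x
      simp only [mem_union, mem_Iio, mem_singleton_iff, mem_Ioi, mem_univ, true_iff]
      rcases lt_trichotomy x t with h | h | h
      · exact Or.inl (Or.inl h)
      · exact Or.inl (Or.inr h)
      · exact Or.inr h
    rw [this, nhdsWithin_union, nhdsWithin_union, nhdsWithin_singleton]
  rw [hdecomp]
  simp only [eventually_sup, eventually_pure]
  refine ⟨⟨?_, ?_⟩, ?_⟩
  · filter_upwards [h1] with x hx; exact hx.trans (le_max_of_le_left (le_max_left _ _))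
  · exact le_max_right _ _
  · filter_upwards [h2] with x hx; exact hx.trans (le_max_of_le_left (le_max_right _ _))

lemma cadlag_bdd {f : unitInterval → ℝ} (hf : Cadlag f) :
    ∃ M : ℝ, ∀ t, |f t| ≤ M := by
  have h : ∀ t : unitInterval, ∃ U : Set unitInterval,
      U ∈ nhds t ∧ ∃ M, ∀ x ∈ U, |f x| ≤ M := by
    intro t
    obtain ⟨M, hM⟩ := cadlag_loc_bdd hf t
    exact ⟨_, hM, M, fun x hx => hx⟩
  choose U hU M hM using h
  obtain ⟨s, hs⟩ := isCompact_univ.elim_nhds_subcover U (fun t _ => hU t)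
  by_cases hsne : s.Nonempty
  · refine ⟨s.sup' hsne M, fun t => ?_⟩
    have : t ∈ ⋃ x ∈ s, U x := hs.2 (mem_univ t)
    simp only [mem_iUnion] at this
    obtain ⟨x, hxs, hxt⟩ := this
    exact (hM x t hxt).trans (Finset.le_sup' M hxs)
  · exfalso
    have : (0 : unitInterval) ∈ ⋃ x ∈ s, U x := hs.2 (mem_univ _)
    simp only [mem_iUnion] at this
    obtain ⟨x, hxs, -⟩ := this
    exact hsne ⟨x, hxs⟩

/-! #### Increasing homeomorphisms -/

lemma isIncHomeo_id : IsIncHomeo id :=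
  ⟨continuous_id, strictMono_id, Function.bijective_id⟩

lemma IsIncHomeo.comp {γ δ : unitInterval → unitInterval} (hγ : IsIncHomeo γ)
    (hδ : IsIncHomeo δ) : IsIncHomeo (γ ∘ δ) :=
  ⟨hγ.1.comp hδ.1, hγ.2.1.comp hδ.2.1, hγ.2.2.comp hδ.2.2⟩

lemma IsIncHomeo.map_zero {γ : unitInterval → unitInterval} (hγ : IsIncHomeo γ) : γ 0 = 0 := by
  obtain ⟨x, hx⟩ := hγ.2.2.2 0
  have h1 : γ 0 ≤ γ x := hγ.2.1.monotone (by
    have : (0:ℝ) ≤ (x:ℝ) := x.2.1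
    exact Subtype.coe_le_coe.1 this)
  rw [hx] at h1
  exact le_antisymm h1 (Subtype.coe_le_coe.1 (γ 0).2.1)

lemma IsIncHomeo.map_one {γ : unitInterval → unitInterval} (hγ : IsIncHomeo γ) : γ 1 = 1 := by
  obtain ⟨x, hx⟩ := hγ.2.2.2 1
  have h1 : γ x ≤ γ 1 := hγ.2.1.monotone (by
    have : (x:ℝ) ≤ 1 := x.2.2
    exact Subtype.coe_le_coe.1 this)
  rw [hx] at h1
  exact le_antisymm (Subtype.coe_le_coe.1 (γ 1).2.2) h1

lemma IsIncHomeo.inv {γ : unitInterval → unitInterval} (hγ : IsIncHomeo γ) :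
    ∃ δ : unitInterval → unitInterval, IsIncHomeo δ ∧ (∀ t, γ (δ t) = t) ∧ ∀ t, δ (γ t) = t := by
  let e : unitInterval ≃o unitInterval := hγ.2.1.orderIsoOfSurjective γ hγ.2.2.2
  have hec : Continuous (e : unitInterval → unitInterval) := hγ.1
  let h : unitInterval ≃ₜ unitInterval := Continuous.homeoOfEquivCompactToT2 (f := e.toEquiv) hec
  refine ⟨e.symm, ⟨?_, ?_, e.symm.bijective⟩, fun t => e.apply_symm_apply t,
    fun t => e.symm_apply_apply t⟩
  · exact h.symm.continuous
  · exact e.symm.strictMono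

lemma IsIncHomeo.tendsto_Ioi {γ : unitInterval → unitInterval} (hγ : IsIncHomeo γ)
    (t : unitInterval) :
    Tendsto γ (nhdsWithin t (Ioi t)) (nhdsWithin (γ t) (Ioi (γ t))) := by
  rw [tendsto_nhdsWithin_iff]
  exact ⟨(hγ.1.tendsto t).mono_left nhdsWithin_le_nhds, by
    filter_upwards [self_mem_nhdsWithin] with x hx
    exact hγ.2.1 hx⟩

lemma IsIncHomeo.tendsto_Iio {γ : unitInterval → unitInterval} (hγ : IsIncHomeo γ)
    (t : unitInterval) :
    Tendsto γ (nhdsWithin t (Iio t)) (nhdsWithin (γ t) (Iio (γ t))) := by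
  rw [tendsto_nhdsWithin_iff]
  exact ⟨(hγ.1.tendsto t).mono_left nhdsWithin_le_nhds, by
    filter_upwards [self_mem_nhdsWithin] with x hx
    exact hγ.2.1 hx⟩

lemma IsIncHomeo.coe_lt_one {γ : unitInterval → unitInterval} (hγ : IsIncHomeo γ)
    {t : unitInterval} (ht : (t : ℝ) < 1) : ((γ t : unitInterval) : ℝ) < 1 := by
  have : t < 1 := Subtype.coe_lt_coe.1 (by simpa using ht)
  have := hγ.2.1 this
  rw [hγ.map_one] at this
  exact lt_of_lt_of_le (Subtype.coe_lt_coe.2 this) (by norm_num)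

lemma IsIncHomeo.coe_pos {γ : unitInterval → unitInterval} (hγ : IsIncHomeo γ)
    {t : unitInterval} (ht : 0 < (t : ℝ)) : 0 < ((γ t : unitInterval) : ℝ) := by
  have : (0:unitInterval) < t := Subtype.coe_lt_coe.1 (by simpa using ht)
  have := hγ.2.1 this
  rw [hγ.map_zero] at this
  exact lt_of_le_of_lt (by norm_num) (Subtype.coe_lt_coe.2 this)

lemma Cadlag.comp_incHomeo {f : unitInterval → ℝ} {γ : unitInterval → unitInterval}
    (hf : Cadlag f) (hγ : IsIncHomeo γ) : Cadlag (f ∘ γ) := by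
  constructor
  · intro t ht
    exact (hf.1 (γ t) (hγ.coe_lt_one ht)).comp (hγ.tendsto_Ioi t)
  · intro t ht
    obtain ⟨l, hl⟩ := hf.2 (γ t) (hγ.coe_pos ht)
    exact ⟨l, hl.comp (hγ.tendsto_Iio t)⟩

/-! #### Uniform limits of càdlàg functions -/

lemma cadlag_of_unif {H : ℕ → unitInterval → ℝ} {F : unitInterval → ℝ}
    (hH : ∀ k, Cadlag (H k))
    (hu : ∀ ε : ℝ, 0 < ε → ∃ K : ℕ, ∀ k ≥ K, ∀ t, |H k t - F t| ≤ ε) : Cadlag F := by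
  constructor
  · intro t ht
    rw [Metric.tendsto_nhds]
    intro ε hε
    obtain ⟨K, hK⟩ := hu (ε/4) (by linarith)
    have h1 : ∀ᶠ x in nhdsWithin t (Ioi t), dist (H K x) (H K t) < ε / 4 :=
      Metric.tendsto_nhds.1 ((hH K).1 t ht) (ε/4) (by linarith)
    filter_upwards [h1] with x hx
    have e1 : dist (F x) (H K x) ≤ ε/4 := by
      rw [Real.dist_eq, abs_sub_comm]; exact hK K le_rfl x
    have e2 : dist (H K t) (F t) ≤ ε/4 := by
      rw [Real.dist_eq]; exact hK K le_rfl t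
    calc dist (F x) (F t) ≤ dist (F x) (H K x) + dist (H K x) (H K t) + dist (H K t) (F t) :=
          dist_triangle4 _ _ _ _
      _ < ε := by linarith
  · intro t ht
    by_cases hbot : nhdsWithin t (Iio t) = ⊥
    · exact ⟨0, by rw [hbot]; exact tendsto_bot⟩
    haveI : (nhdsWithin t (Iio t)).NeBot := ⟨hbot⟩
    choose l hl using fun k => (hH k).2 t ht
    have hcau : CauchySeq l := by
      rw [Metric.cauchySeq_iff]
      intro ε hε
      obtain ⟨K, hK⟩ := hu (ε/4) (by linarith)
      refine ⟨K, fun m hm n hn => ?_⟩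
      have hten : Tendsto (fun x => |H m x - H n x|) (nhdsWithin t (Iio t))
          (nhds (|l m - l n|)) := ((hl m).sub (hl n)).abs
      have hbd : |l m - l n| ≤ ε/2 := by
        refine le_of_tendsto hten (Eventually.of_forall fun x => ?_)
        calc |H m x - H n x| ≤ |H m x - F x| + |F x - H n x| := abs_sub_le _ _ _
          _ ≤ ε/4 + ε/4 := add_le_add (hK m hm x) (by rw [abs_sub_comm]; exact hK n hn x)
          _ = ε/2 := by ring
      rw [Real.dist_eq]
      linarith
    obtain ⟨L, hL⟩ := cauchySeq_tendsto_of_complete hcau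
    refine ⟨L, Metric.tendsto_nhds.2 fun ε hε => ?_⟩
    obtain ⟨K, hK⟩ := hu (ε/4) (by linarith)
    have : ∀ᶠ k in atTop, dist (l k) L < ε/4 := hL (Metric.ball_mem_nhds L (by linarith))
    obtain ⟨k, hk1, hk2⟩ := ((eventually_ge_atTop K).and this).exists
    have h1 : ∀ᶠ x in nhdsWithin t (Iio t), dist (H k x) (l k) < ε / 4 :=
      Metric.tendsto_nhds.1 (hl k) (ε/4) (by linarith)
    filter_upwards [h1] with x hx
    have e1 : dist (F x) (H k x) ≤ ε/4 := by
      rw [Real.dist_eq, abs_sub_comm]; exact hK k hk1 x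
    calc dist (F x) L ≤ dist (F x) (H k x) + dist (H k x) (l k) + dist (l k) L :=
          dist_triangle4 _ _ _ _
      _ < ε := by linarith

/-! #### Basic facts about `rhoPlus` -/

lemma rhoPlus_mem_nonneg {P Q : (unitInterval → ℝ) × (unitInterval → unitInterval)} {c : ℝ}
    (hc : c ∈ { c : ℝ | ∃ γ : unitInterval → unitInterval, IsIncHomeo γ ∧
      (⨆ t : unitInterval, |P.1 (γ t) - Q.1 t|) +
      (⨆ t : unitInterval, |(P.2 (γ t) : ℝ) - (Q.2 t : ℝ)|) = c }) : 0 ≤ c := by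
  obtain ⟨γ, -, hc⟩ := hc
  exact hc ▸ add_nonneg (Real.iSup_nonneg fun t => abs_nonneg _)
    (Real.iSup_nonneg fun t => abs_nonneg _)

lemma rhoPlus_nonneg (P Q : (unitInterval → ℝ) × (unitInterval → unitInterval)) :
    0 ≤ rhoPlus P Q :=
  le_csInf ⟨_, id, isIncHomeo_id, rfl⟩ fun _ hc => rhoPlus_mem_nonneg hc

lemma rhoPlus_le (P Q : (unitInterval → ℝ) × (unitInterval → unitInterval))
    {γ : unitInterval → unitInterval} (hγ : IsIncHomeo γ) :
    rhoPlus P Q ≤ (⨆ t : unitInterval, |P.1 (γ t) - Q.1 t|) +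
      (⨆ t : unitInterval, |(P.2 (γ t) : ℝ) - (Q.2 t : ℝ)|) :=
  csInf_le ⟨0, fun _ hc => rhoPlus_mem_nonneg hc⟩ ⟨γ, hγ, rfl⟩

lemma exists_gamma_of_rhoPlus_lt {P Q : (unitInterval → ℝ) × (unitInterval → unitInterval)}
    {ε M₁ M₂ : ℝ} (hb₁ : ∀ t, |P.1 t| ≤ M₁) (hb₂ : ∀ t, |Q.1 t| ≤ M₂)
    (h : rhoPlus P Q < ε) :
    ∃ γ : unitInterval → unitInterval, IsIncHomeo γ ∧
      ∀ t, |P.1 (γ t) - Q.1 t| + |(P.2 (γ t) : ℝ) - (Q.2 t : ℝ)| < ε := by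
  have hne : { c : ℝ | ∃ γ : unitInterval → unitInterval, IsIncHomeo γ ∧
      (⨆ t : unitInterval, |P.1 (γ t) - Q.1 t|) +
      (⨆ t : unitInterval, |(P.2 (γ t) : ℝ) - (Q.2 t : ℝ)|) = c }.Nonempty :=
    ⟨_, id, isIncHomeo_id, rfl⟩
  obtain ⟨c, ⟨γ, hγ, hc⟩, hcε⟩ := exists_lt_of_csInf_lt hne h
  refine ⟨γ, hγ, fun t => ?_⟩
  have hbA : BddAbove (Set.range fun t : unitInterval => |P.1 (γ t) - Q.1 t|) := by
    refine ⟨M₁ + M₂, forall_mem_range.2 fun t => ?_⟩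
    exact (abs_sub _ _).trans (add_le_add (hb₁ _) (hb₂ _))
  have hbB : BddAbove (Set.range fun t : unitInterval =>
      |(P.2 (γ t) : ℝ) - (Q.2 t : ℝ)|) := by
    refine ⟨2, forall_mem_range.2 fun t => ?_⟩
    have h1 : |(P.2 (γ t) : ℝ)| ≤ 1 := by
      rw [abs_of_nonneg (P.2 (γ t)).2.1]; exact (P.2 (γ t)).2.2
    have h2 : |(Q.2 t : ℝ)| ≤ 1 := by
      rw [abs_of_nonneg (Q.2 t).2.1]; exact (Q.2 t).2.2
    calc |(P.2 (γ t) : ℝ) - (Q.2 t : ℝ)| ≤ |(P.2 (γ t) : ℝ)| + |(Q.2 t : ℝ)| := abs_sub _ _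
      _ ≤ 2 := by linarith
  have e1 : |P.1 (γ t) - Q.1 t| ≤ ⨆ t : unitInterval, |P.1 (γ t) - Q.1 t| := le_ciSup hbA t
  have e2 : |(P.2 (γ t) : ℝ) - (Q.2 t : ℝ)| ≤
      ⨆ t : unitInterval, |(P.2 (γ t) : ℝ) - (Q.2 t : ℝ)| := le_ciSup hbB t
  calc |P.1 (γ t) - Q.1 t| + |(P.2 (γ t) : ℝ) - (Q.2 t : ℝ)| ≤ _ + _ := add_le_add e1 e2
    _ = c := hc
    _ < ε := hcε

lemma InSigma.map_zero {σ : unitInterval → unitInterval} (hσ : InSigma σ) : σ 0 = 0 := by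
  obtain ⟨x, hx⟩ := hσ.2.2 0
  have h1 : σ 0 ≤ σ x := hσ.2.1 (by
    have : (0:ℝ) ≤ (x:ℝ) := x.2.1
    exact Subtype.coe_le_coe.1 this)
  rw [hx] at h1
  exact le_antisymm h1 (Subtype.coe_le_coe.1 (σ 0).2.1)

lemma InSigma.map_one {σ : unitInterval → unitInterval} (hσ : InSigma σ) : σ 1 = 1 := by
  obtain ⟨x, hx⟩ := hσ.2.2 1
  have h1 : σ x ≤ σ 1 := hσ.2.1 (by
    have : (x:ℝ) ≤ 1 := x.2.2
    exact Subtype.coe_le_coe.1 this)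
  rw [hx] at h1
  exact le_antisymm (Subtype.coe_le_coe.1 (σ 1).2.2) h1

lemma half_pow_small : ∀ ε : ℝ, 0 < ε → ∃ K : ℕ, ∀ k ≥ K, 2 * (1/2:ℝ)^k ≤ ε := by
  intro ε hε
  obtain ⟨K, hK⟩ := exists_pow_lt_of_lt_one (show (0:ℝ) < ε/2 by linarith)
    (by norm_num : (1/2:ℝ) < 1)
  refine ⟨K, fun k hk => ?_⟩
  have : (1/2:ℝ)^k ≤ (1/2)^K := pow_le_pow_of_le_one (by norm_num) (by norm_num) hk
  linarith

end Aux

theorem DPlus_complete (Fn : ℕ → unitInterval → ℝ) (σn : ℕ → unitInterval → unitInterval)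
    (hFn : ∀ n, Cadlag (Fn n)) (hσn : ∀ n, InSigma (σn n))
    (hCauchy : ∀ ε : ℝ, 0 < ε → ∃ N : ℕ, ∀ m ≥ N, ∀ n ≥ N,
      rhoPlus (Fn m, σn m) (Fn n, σn n) < ε) :
    ∃ F : unitInterval → ℝ, ∃ σ₀ : unitInterval → unitInterval,
      Cadlag F ∧ InSigma σ₀ ∧
      Filter.Tendsto (fun n => rhoPlus (Fn n, σn n) (F, σ₀)) Filter.atTop (nhds 0) ∧
      ((∀ n, Continuous (Fn n)) → Continuous F) := by
  classical
  choose Mb hMb using fun n => cadlag_bdd (hFn n)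
  have hpos : ∀ k : ℕ, (0:ℝ) < (1/2)^k := fun k => by positivity
  choose N hN using fun k : ℕ => hCauchy ((1/2)^k) (hpos k)
  -- the subsequence indices
  let nk : ℕ → ℕ := fun k => Nat.rec (motive := fun _ => ℕ) (N 0)
    (fun k ih => max (N (k+1)) (ih+1)) k
  have hnk_succ : ∀ k, nk (k+1) = max (N (k+1)) (nk k + 1) := fun k => rfl
  have hnk_ge : ∀ k, N k ≤ nk k := by
    intro k
    cases k with
    | zero => exact le_rfl
    | succ k => rw [hnk_succ]; exact le_max_left _ _
  have hnk_mono : StrictMono nk := strictMono_nat_of_lt_succ (fun k => by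
    rw [hnk_succ]; exact lt_of_lt_of_le (Nat.lt_succ_self _) (le_max_right _ _))
  have hstep : ∀ k, rhoPlus (Fn (nk k), σn (nk k)) (Fn (nk (k+1)), σn (nk (k+1))) < (1/2)^k := by
    intro k
    have h2 : N k ≤ nk (k+1) := (hnk_ge k).trans (hnk_mono (Nat.lt_succ_self k)).le
    exact hN k _ (hnk_ge k) _ h2
  choose γ hγ hγpt using fun k =>
    exists_gamma_of_rhoPlus_lt (P := (Fn (nk k), σn (nk k)))
      (Q := (Fn (nk (k+1)), σn (nk (k+1)))) (hMb (nk k)) (hMb (nk (k+1))) (hstep k)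
  choose δ hδ hδγ hγδ using fun k => (hγ k).inv
  -- reparametrizations
  let Λ : ℕ → unitInterval → unitInterval := fun k => Nat.rec
    (motive := fun _ => unitInterval → unitInterval) id (fun k ih => δ k ∘ ih) k
  have hΛ0 : Λ 0 = id := rfl
  have hΛs : ∀ k, Λ (k+1) = δ k ∘ Λ k := fun k => rfl
  have hΛ : ∀ k, IsIncHomeo (Λ k) := by
    intro k
    induction k with
    | zero => exact isIncHomeo_id
    | succ k ih => rw [hΛs]; exact (hδ k).comp ih
  have hγΛ : ∀ k t, γ k (Λ (k+1) t) = Λ k t := by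
    intro k t
    rw [hΛs]
    exact hδγ k (Λ k t)
  obtain ⟨H, hH⟩ : ∃ H : ℕ → unitInterval → ℝ, ∀ k t, H k t = Fn (nk k) (Λ k t) :=
    ⟨_, fun k t => rfl⟩
  obtain ⟨T, hT⟩ : ∃ T : ℕ → unitInterval → ℝ, ∀ k t, T k t = (σn (nk k) (Λ k t) : ℝ) :=
    ⟨_, fun k t => rfl⟩
  have hkey : ∀ k t, |H (k+1) t - H k t| + |T (k+1) t - T k t| < (1/2)^k := by
    intro k t
    have h1 := hγpt k (Λ (k+1) t)
    rw [hγΛ k t] at h1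
    rw [hH, hH, hT, hT, abs_sub_comm (Fn (nk (k+1)) (Λ (k+1) t)),
      abs_sub_comm ((σn (nk (k+1)) (Λ (k+1) t) : ℝ))]
    exact h1
  have hHd : ∀ t n, dist (H n t) (H (n+1) t) ≤ 1 * (1/2)^n := by
    intro t n
    rw [Real.dist_eq, one_mul, abs_sub_comm]
    have := hkey n t
    have := abs_nonneg (T (n+1) t - T n t)
    linarith
  have hTd : ∀ t n, dist (T n t) (T (n+1) t) ≤ 1 * (1/2)^n := by
    intro t n
    rw [Real.dist_eq, one_mul, abs_sub_comm]
    have := hkey n t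
    have := abs_nonneg (H (n+1) t - H n t)
    linarith
  choose F hF using fun t =>
    cauchySeq_tendsto_of_complete (cauchySeq_of_le_geometric (1/2) 1 (by norm_num) (hHd t))
  choose Tv hTv using fun t =>
    cauchySeq_tendsto_of_complete (cauchySeq_of_le_geometric (1/2) 1 (by norm_num) (hTd t))
  have hFrate : ∀ k t, |H k t - F t| ≤ 2 * (1/2)^k := by
    intro k t
    have := dist_le_of_le_geometric_of_tendsto (1/2) 1 (by norm_num) (hHd t) (hF t) k
    rw [Real.dist_eq] at this
    calc |H k t - F t| ≤ 1 * (1/2)^k / (1 - 1/2) := this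
      _ = 2 * (1/2)^k := by ring
  have hTrate : ∀ k t, |T k t - Tv t| ≤ 2 * (1/2)^k := by
    intro k t
    have := dist_le_of_le_geometric_of_tendsto (1/2) 1 (by norm_num) (hTd t) (hTv t) k
    rw [Real.dist_eq] at this
    calc |T k t - Tv t| ≤ 1 * (1/2)^k / (1 - 1/2) := this
      _ = 2 * (1/2)^k := by ring
  -- the limit time-change
  have hTv01 : ∀ t, Tv t ∈ Set.Icc (0:ℝ) 1 := by
    intro t
    constructor
    · refine ge_of_tendsto' (hTv t) fun k => ?_
      rw [hT]; exact (σn (nk k) (Λ k t)).2.1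
    · refine le_of_tendsto' (hTv t) fun k => ?_
      rw [hT]; exact (σn (nk k) (Λ k t)).2.2
  set σ₀ : unitInterval → unitInterval := fun t => ⟨Tv t, hTv01 t⟩ with hσ₀def
  have hσ₀coe : ∀ t, ((σ₀ t : unitInterval) : ℝ) = Tv t := fun t => rfl
  -- F is càdlàg
  have hFcad : Cadlag F := by
    refine cadlag_of_unif (H := H) (fun k => ?_) (fun ε hε => ?_)
    · have : H k = (Fn (nk k)) ∘ (Λ k) := funext (hH k)
      rw [this]
      exact (hFn (nk k)).comp_incHomeo (hΛ k)
    · obtain ⟨K, hK⟩ := half_pow_small ε hε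
      exact ⟨K, fun k hk t => (hFrate k t).trans (hK k hk)⟩
  -- Tv is continuous
  have hTU : TendstoUniformly T Tv atTop := by
    rw [Metric.tendstoUniformly_iff]
    intro ε hε
    obtain ⟨K, hK⟩ := half_pow_small (ε/2) (by linarith)
    filter_upwards [eventually_ge_atTop K] with k hk t
    rw [Real.dist_eq, abs_sub_comm]
    calc |T k t - Tv t| ≤ 2 * (1/2)^k := hTrate k t
      _ ≤ ε/2 := hK k hk
      _ < ε := by linarith
  have hTvcont : Continuous Tv := by
    refine hTU.continuous (Eventually.of_forall fun k => ?_).frequently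
    have : T k = fun t => (σn (nk k) (Λ k t) : ℝ) := funext (hT k)
    rw [this]
    exact continuous_subtype_val.comp ((hσn (nk k)).1.comp (hΛ k).1)
  -- σ₀ ∈ Σ
  have hσ₀cont : Continuous σ₀ := hTvcont.subtype_mk _
  have hσ₀mono : Monotone σ₀ := by
    intro a b hab
    rw [hσ₀def, Subtype.mk_le_mk]
    refine le_of_tendsto_of_tendsto' (hTv a) (hTv b) fun k => ?_
    rw [hT, hT]
    exact Subtype.coe_le_coe.2 ((hσn (nk k)).2.1 ((hΛ k).2.1.monotone hab))
  have hΛz : ∀ k, Λ k 0 = 0 := fun k => (hΛ k).map_zero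
  have hΛo : ∀ k, Λ k 1 = 1 := fun k => (hΛ k).map_one
  have hT0 : ∀ k, T k 0 = 0 := by
    intro k
    rw [hT, hΛz, (hσn (nk k)).map_zero]
    simp
  have hT1 : ∀ k, T k 1 = 1 := by
    intro k
    rw [hT, hΛo, (hσn (nk k)).map_one]
    simp
  have hTv0 : Tv 0 = 0 :=
    tendsto_nhds_unique (hTv 0) (by simp only [hT0]; exact tendsto_const_nhds)
  have hTv1 : Tv 1 = 1 :=
    tendsto_nhds_unique (hTv 1) (by simp only [hT1]; exact tendsto_const_nhds)
  have hσ₀surj : Function.Surjective σ₀ := by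
    intro y
    have hmem : (y:ℝ) ∈ Icc (Tv 0) (Tv 1) := by rw [hTv0, hTv1]; exact y.2
    obtain ⟨x, hx⟩ := intermediate_value_univ (0:unitInterval) (1:unitInterval) hTvcont hmem
    exact ⟨x, Subtype.ext hx⟩
  -- the convergence
  have hmain : Tendsto (fun n => rhoPlus (Fn n, σn n) (F, σ₀)) atTop (nhds 0) := by
    rw [Metric.tendsto_atTop]
    intro ε hε
    obtain ⟨N₁, hN₁⟩ := hCauchy (ε/8) (by linarith)
    obtain ⟨K, hK⟩ := half_pow_small (ε/8) (by linarith)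
    refine ⟨max N₁ K, fun n hn => ?_⟩
    set k := max N₁ K with hk
    have hnkk : N₁ ≤ nk k := le_trans (le_max_left _ _) hnk_mono.le_apply
    have h8 : 2*(1/2:ℝ)^k ≤ ε/8 := hK k (le_max_right _ _)
    have hrr : rhoPlus (Fn n, σn n) (Fn (nk k), σn (nk k)) < ε/8 :=
      hN₁ n (le_trans (le_max_left _ _) hn) (nk k) hnkk
    obtain ⟨g, hg, hgpt⟩ := exists_gamma_of_rhoPlus_lt (P := (Fn n, σn n))
      (Q := (Fn (nk k), σn (nk k))) (hMb n) (hMb (nk k)) hrr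
    have hw : IsIncHomeo (g ∘ Λ k) := hg.comp (hΛ k)
    have s1 : (⨆ t : unitInterval, |Fn n ((g ∘ Λ k) t) - F t|) ≤ ε/8 + ε/8 := by
      refine ciSup_le fun t => ?_
      have hA : |Fn n (g (Λ k t)) - Fn (nk k) (Λ k t)| ≤ ε/8 := by
        have := hgpt (Λ k t)
        have := abs_nonneg ((σn n (g (Λ k t)) : ℝ) - (σn (nk k) (Λ k t) : ℝ))
        linarith
      have hB : |Fn (nk k) (Λ k t) - F t| ≤ ε/8 := by
        rw [← hH k t]; exact (hFrate k t).trans h8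
      calc |Fn n ((g ∘ Λ k) t) - F t|
          ≤ |Fn n (g (Λ k t)) - Fn (nk k) (Λ k t)| + |Fn (nk k) (Λ k t) - F t| :=
            abs_sub_le _ _ _
        _ ≤ ε/8 + ε/8 := add_le_add hA hB
    have s2 : (⨆ t : unitInterval, |((σn n ((g ∘ Λ k) t) : unitInterval) : ℝ) -
        ((σ₀ t : unitInterval) : ℝ)|) ≤ ε/8 + ε/8 := by
      refine ciSup_le fun t => ?_
      have hA : |((σn n (g (Λ k t)) : unitInterval) : ℝ) -
          ((σn (nk k) (Λ k t) : unitInterval) : ℝ)| ≤ ε/8 := by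
        have := hgpt (Λ k t)
        have := abs_nonneg (Fn n (g (Λ k t)) - Fn (nk k) (Λ k t))
        linarith
      have hB : |((σn (nk k) (Λ k t) : unitInterval) : ℝ) - Tv t| ≤ ε/8 := by
        rw [← hT k t]; exact (hTrate k t).trans h8
      rw [hσ₀coe]
      calc |((σn n ((g ∘ Λ k) t) : unitInterval) : ℝ) - Tv t|
          ≤ |((σn n (g (Λ k t)) : unitInterval) : ℝ) -
              ((σn (nk k) (Λ k t) : unitInterval) : ℝ)| +
            |((σn (nk k) (Λ k t) : unitInterval) : ℝ) - Tv t| := abs_sub_le _ _ _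
        _ ≤ ε/8 + ε/8 := add_le_add hA hB
    have hle : rhoPlus (Fn n, σn n) (F, σ₀) ≤ (ε/8 + ε/8) + (ε/8 + ε/8) :=
      le_trans (rhoPlus_le (Fn n, σn n) (F, σ₀) hw) (add_le_add s1 s2)
    rw [Real.dist_eq, sub_zero, abs_of_nonneg (rhoPlus_nonneg _ _)]
    linarith
  refine ⟨F, σ₀, hFcad, ⟨hσ₀cont, hσ₀mono, hσ₀surj⟩, hmain, ?_⟩
  intro hc
  have hHU : TendstoUniformly H F atTop := by
    rw [Metric.tendstoUniformly_iff]
    intro ε hε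
    obtain ⟨K, hK⟩ := half_pow_small (ε/2) (by linarith)
    filter_upwards [eventually_ge_atTop K] with k hk t
    rw [Real.dist_eq, abs_sub_comm]
    calc |H k t - F t| ≤ 2 * (1/2)^k := hFrate k t
      _ ≤ ε/2 := hK k hk
      _ < ε := by linarith
  refine hHU.continuous (Eventually.of_forall fun k => ?_).frequently
  have : H k = fun t => Fn (nk k) (Λ k t) := funext (hH k)
  rw [this]
  exact (hc (nk k)).comp (hΛ k).1
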